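/- Let F(ξ,x) = f(ξ) + Σ_{⟨k,w⟩ ≤ d−1} c_k(x) ξ^k be a semi-quasielliptic polynomial, where f is quasielliptic of degree d with respect to w and each coefficient function c_k : ℚ_pⁿ → ℚ_p satisfies sup_x |c_k(x)|_p < ∞. Then there exist positive constants A₀, A₁ and M₀ ∈ ℕ, independent of x, such that A₀ Ξ(ξ) ≤ |F(ξ,x)|_p ≤ A₁ Ξ(ξ) for all x ∈ ℚ_pⁿ and all ξ with ‖ξ‖_p ≥ p^{M₀}. -/

import Mathlib

open MvPolynomial

/-- `f ∈ ℤ_p[ξ₁,…,ξₙ]` is quasielliptic of degree `d` with respect to weights `w`. -/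
def IsQuasielliptic (p : ℕ) [Fact p.Prime] {n : ℕ} (d : ℕ) (w : Fin n → ℕ)
    (f : MvPolynomial (Fin n) ℤ_[p]) : Prop :=
  f.totalDegree ≠ 0 ∧ (∀ i, 0 < w i) ∧
    (∀ lam : ℚ_[p], lam ≠ 0 → ∀ ξ : Fin n → ℚ_[p],
      aeval (fun i => lam ^ (w i) * ξ i) f = lam ^ d * aeval ξ f) ∧
    (∀ ξ : Fin n → ℚ_[p], aeval ξ f = 0 ↔ ξ = 0)

/-- `Ξ(ξ) = ∑ i, |ξ_i|_p^{d/w_i}`. -/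
noncomputable def Xi (p : ℕ) [Fact p.Prime] {n : ℕ} (d : ℕ) (w : Fin n → ℕ)
    (ξ : Fin n → ℚ_[p]) : ℝ :=
  ∑ i, ‖ξ i‖ ^ ((d : ℝ) / (w i : ℝ))

variable {p : ℕ} [Fact p.Prime] {n : ℕ}

lemma qe_p_gt_one : (1:ℝ) < (p:ℝ) := by
  exact_mod_cast (Fact.out : p.Prime).one_lt

lemma qe_continuous (f : MvPolynomial (Fin n) ℤ_[p]) :
    Continuous fun ξ : Fin n → ℚ_[p] => (aeval ξ f : ℚ_[p]) := by
  have h : ∀ ξ : Fin n → ℚ_[p],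
      (aeval ξ f : ℚ_[p]) = eval ξ (f.map (algebraMap ℤ_[p] ℚ_[p])) := by
    intro ξ; rw [MvPolynomial.eval_map, MvPolynomial.aeval_def]
  simp only [h]
  exact MvPolynomial.continuous_eval _

lemma qe_norm_scale_coord (e : ℤ) (wi : ℕ) (x : ℚ_[p]) :
    ‖((p:ℚ_[p])^e)^wi * x‖ = (p:ℝ)^(-(e * wi)) * ‖x‖ := by
  rw [norm_mul, ← zpow_natCast ((p:ℚ_[p])^e) wi, ← zpow_mul, Padic.norm_p_zpow]

lemma qe_rpow_key (e : ℤ) (d wi : ℕ) (hwi : wi ≠ 0) (x : ℝ) (hx : 0 ≤ x) :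
    ((p:ℝ)^(-(e * wi)) * x) ^ ((d:ℝ)/(wi:ℝ)) =
      (p:ℝ)^(-(e * d)) * x ^ ((d:ℝ)/(wi:ℝ)) := by
  have hp0 : (0:ℝ) < (p:ℝ) := lt_trans one_pos qe_p_gt_one
  rw [Real.mul_rpow (zpow_nonneg hp0.le _) hx]
  congr 1
  rw [← Real.rpow_intCast (p:ℝ) (-(e * wi)), ← Real.rpow_mul hp0.le,
      ← Real.rpow_intCast (p:ℝ) (-(e * d))]
  congr 1
  have : (wi:ℝ) ≠ 0 := Nat.cast_ne_zero.mpr hwi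
  push_cast
  field_simp

lemma qe_Xi_scale (d : ℕ) (w : Fin n → ℕ) (hw : ∀ i, 0 < w i) (e : ℤ)
    (ξ : Fin n → ℚ_[p]) :
    Xi p d w (fun i => ((p:ℚ_[p])^e)^(w i) * ξ i) = (p:ℝ)^(-(e * d)) * Xi p d w ξ := by
  unfold Xi
  rw [Finset.mul_sum]
  refine Finset.sum_congr rfl fun i _ => ?_
  rw [qe_norm_scale_coord, qe_rpow_key e d (w i) (hw i).ne' _ (norm_nonneg _)]

lemma qe_aeval_scale (d : ℕ) (w : Fin n → ℕ) (f : MvPolynomial (Fin n) ℤ_[p])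
    (hf : IsQuasielliptic p d w f) (e : ℤ) (ξ : Fin n → ℚ_[p]) :
    ‖(aeval (fun i => ((p:ℚ_[p])^e)^(w i) * ξ i) f : ℚ_[p])‖
      = (p:ℝ)^(-(e * d)) * ‖(aeval ξ f : ℚ_[p])‖ := by
  have hpne : ((p:ℚ_[p]))^e ≠ 0 :=
    zpow_ne_zero _ (Nat.cast_ne_zero.mpr (Fact.out : p.Prime).ne_zero)
  rw [hf.2.2.1 _ hpne ξ, norm_mul, ← zpow_natCast ((p:ℚ_[p])^e) d, ← zpow_mul,
    Padic.norm_p_zpow]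

lemma qe_Xi_nonneg (d : ℕ) (w : Fin n → ℕ) (ξ : Fin n → ℚ_[p]) : 0 ≤ Xi p d w ξ :=
  Finset.sum_nonneg fun i _ => Real.rpow_nonneg (norm_nonneg _) _

lemma qe_pow_rpow (d wi : ℕ) (hwi : wi ≠ 0) :
    (((p:ℝ)^wi) : ℝ) ^ ((d:ℝ)/(wi:ℝ)) = (p:ℝ)^d := by
  have hp0 : (0:ℝ) < (p:ℝ) := lt_trans one_pos qe_p_gt_one
  rw [← Real.rpow_natCast (p:ℝ) wi, ← Real.rpow_mul hp0.le, ← Real.rpow_natCast (p:ℝ) d]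
  congr 1
  field_simp

lemma qe_Xi_le_on_K (d : ℕ) (w : Fin n → ℕ) (hw : ∀ i, 0 < w i) (ξ : Fin n → ℚ_[p])
    (h : ∀ i, ‖ξ i‖ ≤ (p:ℝ)^(w i)) : Xi p d w ξ ≤ n * (p:ℝ)^d := by
  have : Xi p d w ξ ≤ ∑ _i : Fin n, (p:ℝ)^d := by
    refine Finset.sum_le_sum fun i _ => ?_
    calc ‖ξ i‖ ^ ((d:ℝ)/(w i:ℝ)) ≤ ((p:ℝ)^(w i)) ^ ((d:ℝ)/(w i:ℝ)) :=
          Real.rpow_le_rpow (norm_nonneg _) (h i) (by positivity)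
      _ = (p:ℝ)^d := qe_pow_rpow d (w i) (hw i).ne'
  simpa using this

set_option maxHeartbeats 1000000 in
lemma qe_one_le_Xi (d : ℕ) (w : Fin n → ℕ) (ξ : Fin n → ℚ_[p])
    (h : ∃ i, 1 ≤ ‖ξ i‖) : 1 ≤ Xi p d w ξ := by
  obtain ⟨i, hi⟩ := h
  have h1 : (1:ℝ) ≤ ‖ξ i‖ ^ ((d:ℝ)/(w i:ℝ)) := by
    calc (1:ℝ) = (1:ℝ) ^ ((d:ℝ)/(w i:ℝ)) := (Real.one_rpow _).symm
      _ ≤ ‖ξ i‖ ^ ((d:ℝ)/(w i:ℝ)) :=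
          Real.rpow_le_rpow zero_le_one hi (div_nonneg (Nat.cast_nonneg _) (Nat.cast_nonneg _))
  calc (1:ℝ) ≤ ‖ξ i‖ ^ ((d:ℝ)/(w i:ℝ)) := h1
    _ ≤ Xi p d w ξ := Finset.single_le_sum (f := fun j => ‖ξ j‖ ^ ((d:ℝ)/(w j:ℝ)))
        (fun j _ => Real.rpow_nonneg (norm_nonneg _) _) (Finset.mem_univ i)

lemma qe_K_compact (w : Fin n → ℕ) :
    IsCompact {ξ : Fin n → ℚ_[p] |
      (∀ i, ‖ξ i‖ ≤ (p:ℝ)^(w i)) ∧ ∃ i, 1 ≤ ‖ξ i‖} := by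
  have hp1 : (1:ℝ) ≤ (p:ℝ) := le_of_lt qe_p_gt_one
  have hclosed : IsClosed {ξ : Fin n → ℚ_[p] |
      (∀ i, ‖ξ i‖ ≤ (p:ℝ)^(w i)) ∧ ∃ i, 1 ≤ ‖ξ i‖} := by
    have h1 : IsClosed {ξ : Fin n → ℚ_[p] | ∀ i, ‖ξ i‖ ≤ (p:ℝ)^(w i)} := by
      have : {ξ : Fin n → ℚ_[p] | ∀ i, ‖ξ i‖ ≤ (p:ℝ)^(w i)}
          = ⋂ i, {ξ | ‖ξ i‖ ≤ (p:ℝ)^(w i)} := by ext ξ; simp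
      rw [this]
      exact isClosed_iInter fun i =>
        isClosed_le ((continuous_apply i).norm) continuous_const
    have h2 : IsClosed {ξ : Fin n → ℚ_[p] | ∃ i, 1 ≤ ‖ξ i‖} := by
      have : {ξ : Fin n → ℚ_[p] | ∃ i, 1 ≤ ‖ξ i‖}
          = ⋃ i, {ξ | 1 ≤ ‖ξ i‖} := by ext ξ; simp
      rw [this]
      exact isClosed_iUnion_of_finite fun i =>
        isClosed_le continuous_const ((continuous_apply i).norm)
    exact h1.inter h2
  have hbdd : Bornology.IsBounded {ξ : Fin n → ℚ_[p] |
      (∀ i, ‖ξ i‖ ≤ (p:ℝ)^(w i)) ∧ ∃ i, 1 ≤ ‖ξ i‖} := by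
    refine (Metric.isBounded_iff_subset_closedBall 0).mpr
      ⟨(p:ℝ)^(Finset.univ.sup w), fun ξ hξ => ?_⟩
    rw [Metric.mem_closedBall, dist_zero_right]
    refine pi_norm_le_iff_of_nonneg (by positivity) |>.mpr fun i => ?_
    exact (hξ.1 i).trans (pow_le_pow_right₀ hp1 (Finset.le_sup (Finset.mem_univ i)))
  exact Metric.isCompact_of_isClosed_isBounded hclosed hbdd

lemma qe_core (d : ℕ) (w : Fin n → ℕ) (f : MvPolynomial (Fin n) ℤ_[p])
    (hf : IsQuasielliptic p d w f) (hn : 0 < n) :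
    ∃ A B : ℝ, 0 < A ∧ 0 < B ∧ ∀ ξ : Fin n → ℚ_[p], ξ ≠ 0 →
      A * Xi p d w ξ ≤ ‖(aeval ξ f : ℚ_[p])‖ ∧
      ‖(aeval ξ f : ℚ_[p])‖ ≤ B * Xi p d w ξ := by
  have hp1 : (1:ℝ) < (p:ℝ) := qe_p_gt_one
  have hp0 : (0:ℝ) < (p:ℝ) := lt_trans one_pos hp1
  have hw := hf.2.1
  set K := {ξ : Fin n → ℚ_[p] | (∀ i, ‖ξ i‖ ≤ (p:ℝ)^(w i)) ∧ ∃ i, 1 ≤ ‖ξ i‖} with hKdef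
  have hKc : IsCompact K := qe_K_compact w
  have hKne : K.Nonempty := by
    refine ⟨fun _ => 1, fun i => ?_, ⟨⟨0, hn⟩, by simp⟩⟩
    simpa using one_le_pow₀ hp1.le
  obtain ⟨a, haK, hamin⟩ := hKc.exists_isMinOn hKne ((qe_continuous f).norm.continuousOn)
  obtain ⟨b, hbK, hbmax⟩ := hKc.exists_isMaxOn hKne ((qe_continuous f).norm.continuousOn)
  have hA' : 0 < ‖(aeval a f : ℚ_[p])‖ := by
    rw [norm_pos_iff]
    intro h0
    have ha0 : a = 0 := (hf.2.2.2 a).mp h0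
    obtain ⟨i, hi⟩ := haK.2
    rw [ha0] at hi
    simp at hi
    linarith
  have hB : 0 < ‖(aeval b f : ℚ_[p])‖ := lt_of_lt_of_le hA' (hbmax haK)
  have hD : (0:ℝ) < n * (p:ℝ)^d := by positivity
  refine ⟨‖(aeval a f : ℚ_[p])‖ / (n * (p:ℝ)^d), ‖(aeval b f : ℚ_[p])‖,
    by positivity, hB, fun ξ hξ => ?_⟩
  classical
  -- choose the scaling exponent
  set s : Finset (Fin n) := Finset.univ.filter (fun i => ξ i ≠ 0) with hsdef
  have hs : s.Nonempty := by
    obtain ⟨i, hi⟩ := Function.ne_iff.mp hξ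
    refine ⟨i, by simp only [hsdef, Finset.mem_filter, Finset.mem_univ, true_and]; simpa using hi⟩
  set q : ℚ := s.inf' hs (fun i => ((ξ i).valuation : ℚ) / (w i : ℚ)) with hq
  set m : ℤ := ⌈q⌉ with hm
  set e : ℤ := -m with he
  set ξ' : Fin n → ℚ_[p] := fun i => ((p:ℚ_[p])^e)^(w i) * ξ i with hξ'
  have hcoord : ∀ i, ξ i ≠ 0 →
      ‖ξ' i‖ = (p:ℝ)^((m * w i - (ξ i).valuation : ℤ)) := by
    intro i hi
    rw [hξ']
    rw [qe_norm_scale_coord, Padic.norm_eq_zpow_neg_valuation hi, ← zpow_add₀ (ne_of_gt hp0)]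
    congr 1
    rw [he]; ring
  have hmemK : ξ' ∈ K := by
    constructor
    · intro i
      by_cases hi : ξ i = 0
      · simp only [hξ', hi, mul_zero, norm_zero]
        positivity
      · rw [hcoord i hi]
        have hiq : (m : ℚ) < ((ξ i).valuation : ℚ) / (w i : ℚ) + 1 := by
          calc (m:ℚ) < q + 1 := Int.ceil_lt_add_one q
            _ ≤ ((ξ i).valuation : ℚ) / (w i : ℚ) + 1 := by
                have : q ≤ ((ξ i).valuation : ℚ) / (w i : ℚ) :=
                  Finset.inf'_le _ (by simp [hsdef, hi])
                linarith
        have hwiq : (0:ℚ) < (w i : ℚ) := by exact_mod_cast hw i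
        have hint : m * (w i : ℤ) - (ξ i).valuation ≤ (w i : ℤ) := by
          have h2 : (m:ℚ) * (w i : ℚ) < ((ξ i).valuation : ℚ) + (w i : ℚ) := by
            have h2' := mul_lt_mul_of_pos_right hiq hwiq
            rw [add_mul, one_mul, div_mul_cancel₀ _ (ne_of_gt hwiq)] at h2'
            exact h2'
          have h4 : m * (w i : ℤ) < (ξ i).valuation + (w i : ℤ) := by exact_mod_cast h2
          omega
        calc (p:ℝ)^((m * w i - (ξ i).valuation : ℤ))
            ≤ (p:ℝ)^((w i : ℤ)) := zpow_le_zpow_right₀ hp1.le hint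
          _ = (p:ℝ)^(w i) := zpow_natCast _ _
    · obtain ⟨j, hjs, hjq⟩ := Finset.exists_mem_eq_inf' hs
        (fun i => ((ξ i).valuation : ℚ) / (w i : ℚ))
      have hj0 : ξ j ≠ 0 := by simpa [hsdef] using hjs
      refine ⟨j, ?_⟩
      rw [hcoord j hj0]
      have hwjq : (0:ℚ) < (w j : ℚ) := by exact_mod_cast hw j
      have hjm : ((ξ j).valuation : ℚ) / (w j : ℚ) ≤ (m:ℚ) := hjq ▸ Int.le_ceil q
      have hint : (0:ℤ) ≤ m * (w j : ℤ) - (ξ j).valuation := by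
        have h2 : ((ξ j).valuation : ℚ) ≤ (m:ℚ) * (w j : ℚ) := by
          rw [div_le_iff₀ hwjq] at hjm; linarith
        have h3 : (ξ j).valuation ≤ m * (w j : ℤ) := by exact_mod_cast h2
        omega
      calc (1:ℝ) = (p:ℝ)^((0:ℤ)) := by simp
        _ ≤ (p:ℝ)^((m * w j - (ξ j).valuation : ℤ)) := zpow_le_zpow_right₀ hp1.le hint
  -- transfer estimates
  set t : ℝ := (p:ℝ)^(-(e * d)) with ht
  have ht0 : 0 < t := zpow_pos hp0 _
  have h1 : ‖(aeval ξ' f : ℚ_[p])‖ = t * ‖(aeval ξ f : ℚ_[p])‖ :=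
    qe_aeval_scale d w f hf e ξ
  have h2 : Xi p d w ξ' = t * Xi p d w ξ := qe_Xi_scale d w hw e ξ
  have hXub : Xi p d w ξ' ≤ n * (p:ℝ)^d := qe_Xi_le_on_K d w hw ξ' hmemK.1
  have hXlb : (1:ℝ) ≤ Xi p d w ξ' := qe_one_le_Xi d w ξ' hmemK.2
  have hmin : ‖(aeval a f : ℚ_[p])‖ ≤ t * ‖(aeval ξ f : ℚ_[p])‖ := h1 ▸ hamin hmemK
  have hmax : t * ‖(aeval ξ f : ℚ_[p])‖ ≤ ‖(aeval b f : ℚ_[p])‖ := h1 ▸ hbmax hmemK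
  have hXn : 0 ≤ Xi p d w ξ := qe_Xi_nonneg d w ξ
  have hFn : 0 ≤ ‖(aeval ξ f : ℚ_[p])‖ := norm_nonneg _
  constructor
  · rw [div_mul_eq_mul_div, div_le_iff₀ hD]
    have hXt : t * Xi p d w ξ ≤ n * (p:ℝ)^d := h2 ▸ hXub
    nlinarith [mul_le_mul_of_nonneg_right hmin hXn,
      mul_le_mul_of_nonneg_left hXt hFn]
  · have hXt : (1:ℝ) ≤ t * Xi p d w ξ := h2 ▸ hXlb
    nlinarith [mul_le_mul_of_nonneg_left hXt hB.le, hmax]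

lemma qe_d_pos (d : ℕ) (w : Fin n → ℕ) (f : MvPolynomial (Fin n) ℤ_[p])
    (hf : IsQuasielliptic p d w f) (hn : 0 < n) : 1 ≤ d := by
  by_contra h
  have hd0 : d = 0 := by omega
  have hp1 : (1:ℝ) < (p:ℝ) := qe_p_gt_one
  have hw := hf.2.1
  set ξ0 : Fin n → ℚ_[p] := fun _ => 1 with hξ0def
  have hξ0 : ξ0 ≠ 0 := by
    intro h0
    have := congrFun h0 ⟨0, hn⟩
    simp [hξ0def] at this
  have hne : (aeval ξ0 f : ℚ_[p]) ≠ 0 := fun h0 => hξ0 ((hf.2.2.2 _).mp h0)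
  have hpQ : ((p:ℚ_[p])) ≠ 0 := Nat.cast_ne_zero.mpr (Fact.out : p.Prime).ne_zero
  have hconst : ∀ k : ℕ,
      (aeval (fun i => ((p:ℚ_[p])^k)^(w i) * ξ0 i) f : ℚ_[p]) = aeval ξ0 f := by
    intro k
    rw [hf.2.2.1 ((p:ℚ_[p])^k) (pow_ne_zero _ hpQ) ξ0, hd0, pow_zero, one_mul]
  have hlim : Filter.Tendsto (fun k : ℕ => (fun i => ((p:ℚ_[p])^k)^(w i) * ξ0 i))
      Filter.atTop (nhds 0) := by
    rw [tendsto_pi_nhds]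
    intro i
    rw [Pi.zero_apply, tendsto_zero_iff_norm_tendsto_zero]
    have hnorm : ∀ k : ℕ, ‖((p:ℚ_[p])^k)^(w i) * ξ0 i‖ = (((p:ℝ)^(w i))⁻¹)^k := by
      intro k
      rw [hξ0def, mul_one, ← pow_mul, Padic.norm_p_pow, zpow_neg, zpow_natCast,
          ← inv_pow, mul_comm k (w i), pow_mul]
      ring
    simp only [hnorm]
    refine tendsto_pow_atTop_nhds_zero_of_lt_one (by positivity) ?_
    rw [inv_lt_one_iff₀]
    right
    exact one_lt_pow₀ hp1 (hw i).ne'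
  have htend : Filter.Tendsto (fun k : ℕ =>
      (aeval (fun i => ((p:ℚ_[p])^k)^(w i) * ξ0 i) f : ℚ_[p]))
      Filter.atTop (nhds (aeval (0 : Fin n → ℚ_[p]) f)) :=
    ((qe_continuous f).tendsto 0).comp hlim
  have h0 : (aeval (0 : Fin n → ℚ_[p]) f : ℚ_[p]) = 0 := (hf.2.2.2 0).mpr rfl
  have : (aeval ξ0 f : ℚ_[p]) = 0 := by
    refine tendsto_nhds_unique (f := fun _ : ℕ => (aeval ξ0 f : ℚ_[p]))
      (l := Filter.atTop) tendsto_const_nhds ?_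
    rw [← h0]
    simpa only [hconst] using htend
  exact hne this

theorem semiQuasielliptic_bounds' (d : ℕ) (w : Fin n → ℕ) (f : MvPolynomial (Fin n) ℤ_[p])
    (hf : IsQuasielliptic p d w f)
    (S : Finset (Fin n →₀ ℕ)) (hS : ∀ k ∈ S, (∑ i, k i * w i) ≤ d - 1)
    (c : (Fin n →₀ ℕ) → (Fin n → ℚ_[p]) → ℚ_[p])
    (hc : ∀ k ∈ S, ∃ C : ℝ, ∀ x, ‖c k x‖ ≤ C) :
    ∃ (A₀ A₁ : ℝ) (M₀ : ℕ), 0 < A₀ ∧ 0 < A₁ ∧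
      ∀ (x ξ : Fin n → ℚ_[p]), (∃ i, (p : ℝ) ^ (M₀ : ℕ) ≤ ‖ξ i‖) →
        A₀ * Xi p d w ξ ≤
          ‖(aeval ξ f + ∑ k ∈ S, c k x * ∏ i, ξ i ^ (k i) : ℚ_[p])‖ ∧
        ‖(aeval ξ f + ∑ k ∈ S, c k x * ∏ i, ξ i ^ (k i) : ℚ_[p])‖ ≤
          A₁ * Xi p d w ξ := by
  rcases Nat.eq_zero_or_pos n with hn0 | hn
  · refine ⟨1, 1, 0, one_pos, one_pos, fun x ξ hbig => ?_⟩
    exfalso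
    obtain ⟨i, -⟩ := hbig
    subst hn0
    exact i.elim0
  have hp1 : (1:ℝ) < (p:ℝ) := qe_p_gt_one
  have hp0 : (0:ℝ) < (p:ℝ) := lt_trans one_pos hp1
  have hw := hf.2.1
  have hd1 : 1 ≤ d := qe_d_pos d w f hf hn
  obtain ⟨A', B, hA', hB, hcore⟩ := qe_core d w f hf hn
  choose! C hC using hc
  set Cm : ℝ := ∑ k ∈ S, |C k| with hCm
  have hCm0 : 0 ≤ Cm := Finset.sum_nonneg fun k _ => abs_nonneg _
  have hCk : ∀ k ∈ S, C k ≤ Cm := fun k hk =>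
    (le_abs_self _).trans (Finset.single_le_sum (f := fun k => |C k|) (fun j _ => abs_nonneg _) hk)
  set C' : ℝ := S.card * Cm + 1 with hC'
  have hC'0 : 0 < C' := by positivity
  obtain ⟨N, hN⟩ := pow_unbounded_of_one_lt (2 * C' / A') hp1
  set W : ℕ := Finset.univ.sup w with hW
  refine ⟨A' / 2, B + A' / 2, N * W, by positivity, by positivity, fun x ξ hbig => ?_⟩
  obtain ⟨i₀, hi₀⟩ := hbig
  have hξ0 : ξ ≠ 0 := by
    intro h0
    rw [h0] at hi₀
    simp only [Pi.zero_apply, norm_zero] at hi₀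
    have : (0:ℝ) < (p:ℝ)^(N*W) := by positivity
    linarith
  obtain ⟨hlow, hup⟩ := hcore ξ hξ0
  have hune : (Finset.univ : Finset (Fin n)).Nonempty := ⟨⟨0, hn⟩, Finset.mem_univ _⟩
  set M : ℝ := Finset.univ.sup' hune (fun i => ‖ξ i‖ ^ ((w i:ℝ)⁻¹)) with hM
  have hrpow_pow : ∀ (x : ℝ), 0 ≤ x → ∀ i : Fin n, (x ^ ((w i:ℝ)⁻¹)) ^ (w i) = x := by
    intro x hx i
    rw [← Real.rpow_natCast (x ^ ((w i:ℝ)⁻¹)) (w i), ← Real.rpow_mul hx,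
      inv_mul_cancel₀ (Nat.cast_ne_zero.mpr (hw i).ne'), Real.rpow_one]
  have hMle : ∀ i, ‖ξ i‖ ≤ M ^ (w i) := by
    intro i
    have h := Finset.le_sup' (fun i => ‖ξ i‖ ^ ((w i:ℝ)⁻¹)) (Finset.mem_univ i)
    calc ‖ξ i‖ = (‖ξ i‖ ^ ((w i:ℝ)⁻¹)) ^ (w i) := (hrpow_pow _ (norm_nonneg _) i).symm
      _ ≤ M ^ (w i) := pow_le_pow_left₀ (Real.rpow_nonneg (norm_nonneg _) _) h _
  have hMpN : (p:ℝ)^N ≤ M := by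
    have h1 : ((p:ℝ)^(N*W)) ^ ((w i₀:ℝ)⁻¹) ≤ ‖ξ i₀‖ ^ ((w i₀:ℝ)⁻¹) :=
      Real.rpow_le_rpow (by positivity) hi₀ (by positivity)
    have h2 : (p:ℝ)^N ≤ ((p:ℝ)^(N*W)) ^ ((w i₀:ℝ)⁻¹) := by
      rw [← Real.rpow_natCast (p:ℝ) N, ← Real.rpow_natCast (p:ℝ) (N*W),
        ← Real.rpow_mul hp0.le, Real.rpow_le_rpow_left_iff hp1, mul_comm ((N*W : ℕ):ℝ),
        inv_mul_eq_div, le_div_iff₀ (by exact_mod_cast hw i₀)]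
      have : N * w i₀ ≤ N * W := Nat.mul_le_mul_left N (Finset.le_sup (Finset.mem_univ i₀))
      exact_mod_cast this
    exact le_trans h2 (h1.trans (Finset.le_sup' (f := fun i => ‖ξ i‖ ^ ((w i:ℝ)⁻¹)) (Finset.mem_univ i₀)))
  have hM1 : (1:ℝ) ≤ M := le_trans (one_le_pow₀ hp1.le) hMpN
  have hM0 : (0:ℝ) < M := lt_of_lt_of_le one_pos hM1
  have hMXi : M ^ d ≤ Xi p d w ξ := by
    obtain ⟨j, -, hj⟩ := Finset.exists_mem_eq_sup' hune (fun i => ‖ξ i‖ ^ ((w i:ℝ)⁻¹))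
    have hMd : M ^ d = ‖ξ j‖ ^ ((d:ℝ)/(w j:ℝ)) := by
      rw [hM, hj]
      rw [← Real.rpow_natCast (‖ξ j‖ ^ ((w j:ℝ)⁻¹)) d, ← Real.rpow_mul (norm_nonneg _),
        inv_mul_eq_div]
    rw [hMd]
    exact Finset.single_le_sum (f := fun i => ‖ξ i‖ ^ ((d:ℝ)/(w i:ℝ)))
      (fun i _ => Real.rpow_nonneg (norm_nonneg _) _) (Finset.mem_univ j)
  set g : ℚ_[p] := ∑ k ∈ S, c k x * ∏ i, ξ i ^ (k i) with hg
  have hgb : ‖g‖ ≤ C' * M ^ (d-1) := by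
    have hMd10 : (0:ℝ) ≤ M ^ (d-1) := pow_nonneg hM0.le _
    calc ‖g‖ ≤ ∑ k ∈ S, ‖c k x * ∏ i, ξ i ^ (k i)‖ := norm_sum_le _ _
      _ ≤ ∑ k ∈ S, Cm * M ^ (d-1) := by
          refine Finset.sum_le_sum fun k hk => ?_
          rw [norm_mul]
          have hterm : ‖∏ i, ξ i ^ (k i)‖ ≤ M ^ (d-1) := by
            rw [norm_prod]
            simp only [norm_pow]
            calc ∏ i, ‖ξ i‖ ^ (k i) ≤ ∏ i, (M ^ (w i)) ^ (k i) :=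
                  Finset.prod_le_prod (fun i _ => pow_nonneg (norm_nonneg _) _)
                    (fun i _ => pow_le_pow_left₀ (norm_nonneg _) (hMle i) _)
              _ = M ^ (∑ i, w i * k i) := by
                  simp only [← pow_mul]
                  exact Finset.prod_pow_eq_pow_sum _ _ _
              _ ≤ M ^ (d-1) := by
                  refine pow_le_pow_right₀ hM1 ?_
                  calc ∑ i, w i * k i = ∑ i, k i * w i := by
                        exact Finset.sum_congr rfl fun i _ => mul_comm _ _
                    _ ≤ d - 1 := hS k hk
          exact mul_le_mul ((hC k hk x).trans (hCk k hk)) hterm (norm_nonneg _) hCm0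
      _ = S.card * Cm * M ^ (d-1) := by rw [Finset.sum_const, nsmul_eq_mul]; ring
      _ ≤ C' * M ^ (d-1) := by
          refine mul_le_mul_of_nonneg_right (by rw [hC']; linarith) hMd10
  have hXn : 0 ≤ Xi p d w ξ := qe_Xi_nonneg d w ξ
  have hgXi : ‖g‖ ≤ (A' / 2) * Xi p d w ξ := by
    have hCN : C' / M ≤ A' / 2 := by
      have hpN0 : (0:ℝ) < (p:ℝ)^N := by positivity
      have h2 : 2 * C' < (p:ℝ)^N * A' := by
        rw [div_lt_iff₀ hA'] at hN
        linarith
      have h3 : C' / (p:ℝ)^N < A' / 2 := by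
        rw [div_lt_div_iff₀ hpN0 two_pos]
        linarith
      exact le_trans (div_le_div_of_nonneg_left hC'0.le hpN0 hMpN) h3.le
    have hMd : M ^ (d-1) * M = M ^ d := by
      rw [← pow_succ, Nat.sub_add_cancel hd1]
    have heq : C' * M ^ (d-1) = (C' / M) * M ^ d := by
      rw [← hMd]
      field_simp
    calc ‖g‖ ≤ C' * M ^ (d-1) := hgb
      _ = (C' / M) * M ^ d := heq
      _ ≤ (A' / 2) * M ^ d := mul_le_mul_of_nonneg_right hCN (pow_nonneg hM0.le _)
      _ ≤ (A' / 2) * Xi p d w ξ := mul_le_mul_of_nonneg_left hMXi (by linarith)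
  have hFg : ‖(aeval ξ f : ℚ_[p])‖ ≤ ‖(aeval ξ f + g : ℚ_[p])‖ + ‖g‖ := by
    have h := norm_sub_le (aeval ξ f + g : ℚ_[p]) g
    simpa using h
  constructor
  · linarith [norm_nonneg g]
  · calc ‖(aeval ξ f + g : ℚ_[p])‖ ≤ ‖(aeval ξ f : ℚ_[p])‖ + ‖g‖ := norm_add_le _ _
      _ ≤ B * Xi p d w ξ + (A'/2) * Xi p d w ξ := by linarith
      _ = (B + A'/2) * Xi p d w ξ := by ring

/-- Let `F(ξ,x) = f(ξ) + ∑_{⟨k,w⟩ ≤ d−1} c_k(x) ξ^k` be a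
semi-quasielliptic polynomial (`f` quasielliptic of degree `d` w.r.t. `w`, the
multi-indices `k ∈ S` satisfying `⟨k,w⟩ ≤ d−1`, and each coefficient function `c_k`
bounded in `p`-adic absolute value). Then there are constants `A₀, A₁ > 0` and
`M₀ ∈ ℕ`, independent of `x`, with `A₀ Ξ(ξ) ≤ |F(ξ,x)|_p ≤ A₁ Ξ(ξ)` for all `x` and
all `ξ` with `‖ξ‖_p ≥ p^{M₀}`. -/
theorem semiQuasielliptic_bounds (p : ℕ) [Fact p.Prime] {n : ℕ}
    (d : ℕ) (w : Fin n → ℕ) (f : MvPolynomial (Fin n) ℤ_[p])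
    (hf : IsQuasielliptic p d w f)
    (S : Finset (Fin n →₀ ℕ)) (hS : ∀ k ∈ S, (∑ i, k i * w i) ≤ d - 1)
    (c : (Fin n →₀ ℕ) → (Fin n → ℚ_[p]) → ℚ_[p])
    (hc : ∀ k ∈ S, ∃ C : ℝ, ∀ x, ‖c k x‖ ≤ C) :
    ∃ (A₀ A₁ : ℝ) (M₀ : ℕ), 0 < A₀ ∧ 0 < A₁ ∧
      ∀ (x ξ : Fin n → ℚ_[p]), (∃ i, (p : ℝ) ^ (M₀ : ℕ) ≤ ‖ξ i‖) →
        A₀ * Xi p d w ξ ≤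
          ‖(aeval ξ f + ∑ k ∈ S, c k x * ∏ i, ξ i ^ (k i) : ℚ_[p])‖ ∧
        ‖(aeval ξ f + ∑ k ∈ S, c k x * ∏ i, ξ i ^ (k i) : ℚ_[p])‖ ≤
          A₁ * Xi p d w ξ := by
  exact semiQuasielliptic_bounds' d w f hf S hS c hc
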